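/- Let E be a semilattice (a commutative semigroup all of whose elements are idempotent) and let X be the set of semicharacters of E. Then the family of evaluation functions X → ℂ, φ ↦ φ(e), indexed by e ∈ E, is linearly independent in the complex vector space of functions X → ℂ. (This is the linear independence of the projections e ∈ E inside the commutative C*-algebra C*(E), used in the proof that the inner product of the compatible ℓ²(G)-space is definite.) -/

import Mathlib

/-- A semicharacter of a semilattice `E`: a `{0,1}`-valued, multiplicative, not identically
zero map `E → ℂ`. -/
def IsSemicharacterOn {E : Type*} [CommSemigroup E] (φ : E → ℂ) : Prop :=
  (∀ e, φ e = 0 ∨ φ e = 1) ∧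
  (∀ e f, φ (e * f) = φ e * φ f) ∧
  (∃ e, φ e = 1)

open Classical in
/-- The principal semicharacter `φ_a`, valued `1` at `x` iff `a * x = a`. -/
lemma principal_semichar {E : Type*} [CommSemigroup E] (hidem : ∀ e : E, e * e = e) (a : E) :
    IsSemicharacterOn (fun x : E => if a * x = a then (1 : ℂ) else 0) := by
  classical
  refine ⟨fun e => by by_cases h : a * e = a <;> simp [h], ?_, ⟨a, by simp [hidem a]⟩⟩
  intro e f
  by_cases he : a * e = a <;> by_cases hf : a * f = a
  · have : a * (e * f) = a := by rw [← mul_assoc, he, hf]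
    simp [he, hf, this]
  · have : a * (e * f) ≠ a := fun h => hf (by
      calc a * f = a * (e * f) * f := by rw [h]
        _ = a * (e * (f * f)) := by rw [mul_assoc, mul_assoc]
        _ = a * (e * f) := by rw [hidem f]
        _ = a := h)
    simp [he, hf, this]
  · have : a * (e * f) ≠ a := fun h => he (by
      calc a * e = a * (e * f) * e := by rw [h]
        _ = a * (f * (e * e)) := by rw [mul_assoc, mul_comm e f, mul_assoc]
        _ = a * (f * e) := by rw [hidem e]
        _ = a * (e * f) := by rw [mul_comm f e]
        _ = a := h)
    simp [he, hf, this]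
  · have : a * (e * f) ≠ a := fun h => he (by
      calc a * e = a * (e * f) * e := by rw [h]
        _ = a * (f * (e * e)) := by rw [mul_assoc, mul_comm e f, mul_assoc]
        _ = a * (f * e) := by rw [hidem e]
        _ = a * (e * f) := by rw [mul_comm f e]
        _ = a := h)
    simp [he, hf, this]

/-- Let `E` be a semilattice (a commutative semigroup all of whose elements
are idempotent) and `X` its set of semicharacters. Then the evaluation functions
`X → ℂ`, `φ ↦ φ(e)`, indexed by `e ∈ E`, are linearly independent over `ℂ`. -/
theorem stmt17 {E : Type*} [CommSemigroup E]
    (hidem : ∀ e : E, e * e = e) :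
    LinearIndependent ℂ
      (fun e : E => fun φ : {φ : E → ℂ // IsSemicharacterOn φ} => φ.1 e) := by
  classical
  letI : PartialOrder E :=
    { le := fun e f => e * f = e
      le_refl := hidem
      le_trans := fun e f g hef hfg => by
        show e * g = e
        calc e * g = e * f * g := by rw [hef]
          _ = e * (f * g) := mul_assoc _ _ _
          _ = e * f := by rw [hfg]
          _ = e := hef
      le_antisymm := fun e f hef hfe => by
        calc e = e * f := hef.symm
          _ = f * e := mul_comm _ _
          _ = f := hfe }
  rw [linearIndependent_iff']
  intro s c hsum i hi
  by_contra hci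
  set t := s.filter (fun j => c j ≠ 0) with ht
  have hit : i ∈ t := Finset.mem_filter.2 ⟨hi, hci⟩
  obtain ⟨a, hat, hmax0⟩ := Finset.exists_maximal (s := t) ⟨i, hit⟩
  have hmax : ∀ b ∈ t, ¬ a < b := fun b hb hab => (lt_iff_le_not_ge.1 hab).2 (hmax0 hb hab.le)
  have has : a ∈ s := (Finset.mem_filter.1 hat).1
  have hca : c a ≠ 0 := (Finset.mem_filter.1 hat).2
  set φa : {φ : E → ℂ // IsSemicharacterOn φ} :=
    ⟨fun x : E => if a * x = a then (1 : ℂ) else 0, principal_semichar hidem a⟩ with hφa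
  have h0 := congrFun hsum φa
  rw [Finset.sum_apply] at h0
  simp only [Pi.smul_apply, smul_eq_mul, Pi.zero_apply] at h0
  have hsingle : ∑ b ∈ s, c b * φa.1 b = c a := by
    rw [Finset.sum_eq_single a]
    · simp [hφa, hidem a]
    · intro b hb hba
      by_cases hcb : c b = 0
      · simp [hcb]
      · have hbt : b ∈ t := Finset.mem_filter.2 ⟨hb, hcb⟩
        have : a * b ≠ a := fun hab =>
          hmax b hbt (lt_of_le_of_ne hab (Ne.symm hba))
        simp [hφa, this]
    · intro h; exact absurd has h
  exact hca (by rw [← hsingle]; exact h0)
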